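/- Let b > 0 and m, n positive integers, and set c_{m,n} = (m+n+1)²/(2mn). Then ∫_ℝ ∫_ℝ (λ − e^{−2πbk} − e^{2πby} − e^{2πb(mk−ny)})₊ dk dy = (c_{m,n}/(2πb)²)·λ(log λ)² + O(λ log λ) as λ → ∞. -/

import Mathlib

open Real MeasureTheory Set

set_option maxHeartbeats 1000000

private lemma hmn_main (β M N lam : ℝ) (hβ : 0 < β) (hM : 1 ≤ M) (hN : 1 ≤ N)
    (hlam : Real.exp 1 ≤ lam) :
    |(∫ k : ℝ, ∫ y : ℝ, max (lam - Real.exp (-(β * k)) - Real.exp (β * y)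
        - Real.exp (β * (M * k - N * y))) 0)
      - (M + N + 1) ^ 2 / (2 * M * N) / β ^ 2 * lam * Real.log lam ^ 2|
    ≤ ((M + N + 1) / (β ^ 2 * N) + (1 + 1 / N) * (M + N + 1) / (β ^ 2 * M)) * lam
        * Real.log lam := by
  have hM0 : (0:ℝ) < M := lt_of_lt_of_le one_pos hM
  have hN0 : (0:ℝ) < N := lt_of_lt_of_le one_pos hN
  have hlam0 : 0 < lam := lt_of_lt_of_le (exp_pos 1) hlam
  set L := Real.log lam with hL
  have hL1 : 1 ≤ L := by
    rw [hL, ← Real.log_exp 1]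
    exact Real.log_le_log (exp_pos 1) hlam
  have hL0 : 0 < L := lt_of_lt_of_le one_pos hL1
  have hexpL : Real.exp L = lam := Real.exp_log hlam0
  set f : ℝ → ℝ → ℝ := fun k y =>
    max (lam - Real.exp (-(β * k)) - Real.exp (β * y) - Real.exp (β * (M * k - N * y))) 0
    with hf
  set y1 : ℝ := L / β with hy1
  set y0 : ℝ → ℝ := fun k => (β * M * k - L) / (β * N) with hy0
  set k0 : ℝ := -(L / β) with hk0
  set k1 : ℝ := (N + 1) * L / (β * M) with hk1
  clear_value f y0 y1 k0 k1 L
  have hβM : (0:ℝ) < β * M := by positivity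
  have hβN : (0:ℝ) < β * N := by positivity
  have hLβ : L / β * β = L := div_mul_cancel₀ L hβ.ne'
  have hk01 : k0 ≤ k1 := by
    have h1 : (0:ℝ) ≤ (N + 1) * L / (β * M) := by positivity
    have h2 : -(L / β) ≤ 0 := neg_nonpos.mpr (by positivity)
    rw [hk0, hk1]; linarith
  -- basic pointwise facts
  have hfnonneg : ∀ k y, 0 ≤ f k y := by
    intro k y; rw [hf]; exact le_max_right _ _
  have hfle : ∀ k y, f k y ≤ lam := by
    intro k y
    rw [hf]
    apply max_le _ hlam0.le
    nlinarith [exp_pos (-(β * k)), exp_pos (β * y), exp_pos (β * (M * k - N * y))]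
  have hfcont2 : Continuous fun p : ℝ × ℝ => f p.1 p.2 := by
    rw [hf]; fun_prop
  have hfk_cont : ∀ k, Continuous (f k) := by
    intro k; rw [hf]; fun_prop
  -- vanishing in y
  have hvan : ∀ k y, y1 < y ∨ y < y0 k → f k y = 0 := by
    intro k y hy
    have h3 : lam - Real.exp (-(β * k)) - Real.exp (β * y) - Real.exp (β * (M * k - N * y)) ≤ 0 := by
      rcases hy with h | h
      · have hb : L < β * y := by
          rw [hy1] at h
          have := (div_lt_iff₀ hβ).mp h
          nlinarith
        have hBe : lam < Real.exp (β * y) := by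
          rw [← hexpL]; exact Real.exp_lt_exp.mpr hb
        nlinarith [exp_pos (-(β * k)), exp_pos (β * (M * k - N * y))]
      · have hb : L < β * (M * k - N * y) := by
          rw [hy0] at h
          simp only at h
          have := (lt_div_iff₀ hβN).mp h
          nlinarith
        have hBe : lam < Real.exp (β * (M * k - N * y)) := by
          rw [← hexpL]; exact Real.exp_lt_exp.mpr hb
        nlinarith [exp_pos (-(β * k)), exp_pos (β * y)]
    rw [hf]
    exact max_eq_right h3
  -- vanishing in k
  have hvank : ∀ k, k < k0 ∨ k1 < k → ∀ y, f k y = 0 := by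
    intro k hk y
    rcases hk with h | h
    · have hb : L < -(β * k) := by
        rw [hk0] at h
        have h2 : k * β < -(L / β) * β := by nlinarith
        rw [neg_mul, hLβ] at h2
        nlinarith
      have hBe : lam < Real.exp (-(β * k)) := by
        rw [← hexpL]; exact Real.exp_lt_exp.mpr hb
      rw [hf]
      apply max_eq_right
      nlinarith [exp_pos (β * y), exp_pos (β * (M * k - N * y))]
    · have hy01' : y1 < y0 k := by
        rw [hk1] at h
        have h1 : (N + 1) * L < k * (β * M) := (div_lt_iff₀ hβM).mp h
        rw [hy1, hy0]
        simp only
        rw [div_lt_div_iff₀ hβ hβN]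
        nlinarith
      rcases lt_or_ge y1 y with h2 | h2
      · exact hvan k y (Or.inl h2)
      · exact hvan k y (Or.inr (lt_of_le_of_lt h2 hy01'))
  -- inner integral localization
  have hg_eq : ∀ k, (∫ y, f k y) = ∫ y in Icc (y0 k) y1, f k y := by
    intro k
    rw [← MeasureTheory.integral_indicator measurableSet_Icc]
    congr 1
    funext y
    by_cases hy : y ∈ Icc (y0 k) y1
    · rw [Set.indicator_of_mem hy]
    · rw [Set.indicator_of_notMem hy]
      apply hvan
      rw [Set.mem_Icc, not_and_or] at hy
      rcases hy with h | h
      · exact Or.inr (lt_of_not_ge h)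
      · exact Or.inl (lt_of_not_ge h)
  have hy01 : ∀ k, k ≤ k1 → y0 k ≤ y1 := by
    intro k hk
    rw [hk1] at hk
    have h1 : k * (β * M) ≤ (N + 1) * L := (le_div_iff₀ hβM).mp hk
    rw [hy0, hy1]
    simp only
    rw [div_le_div_iff₀ hβN hβ]
    nlinarith
  -- monotonicity of the interval length
  have hℓmono : ∀ k, k0 ≤ k → y1 - y0 k ≤ y1 - y0 k0 := by
    intro k hk
    have h1 : β * M * k0 - L ≤ β * M * k - L := by nlinarith
    have h2 : (β * M * k0 - L) / (β * N) ≤ (β * M * k - L) / (β * N) := by gcongr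
    rw [hy0]; simp only
    linarith
  have hv0 : y1 - y0 k0 = (M + N + 1) * L / (β * N) := by
    rw [hy1, hy0, hk0]
    field_simp
    ring
  have hv0nonneg : 0 ≤ y1 - y0 k0 := by rw [hv0]; positivity
  -- inner upper bound
  have hupper_in : ∀ k ∈ Icc k0 k1, (∫ y, f k y) ≤ lam * (y1 - y0 k) := by
    intro k hk
    rw [hg_eq k]
    have h1 : (∫ y in Icc (y0 k) y1, f k y) ≤ ∫ y in Icc (y0 k) y1, lam :=
      setIntegral_mono_on ((hfk_cont k).integrableOn_Icc)
        (integrableOn_const measure_Icc_lt_top.ne) measurableSet_Icc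
        (fun y _ => hfle k y)
    have h2 : (∫ y in Icc (y0 k) y1, (lam : ℝ)) = lam * (y1 - y0 k) := by
      rw [setIntegral_const, Real.volume_real_Icc_of_le (by linarith [hy01 k hk.2])]
      rw [smul_eq_mul]; ring
    linarith
  -- inner lower bound
  have hinner_low : ∀ k ∈ Icc k0 k1,
      lam * (y1 - y0 k) - Real.exp (-(β * k)) * (y1 - y0 k) - lam / β - lam / (β * N)
        ≤ ∫ y, f k y := by
    intro k hk
    have hy01k : y0 k ≤ y1 := hy01 k hk.2
    rw [hg_eq k]
    have e1 : β * y1 = L := by rw [hy1]; field_simp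
    have e2 : β * (M * k - N * y0 k) = L := by
      have h : β * N * y0 k = β * M * k - L := by
        rw [hy0]; simp only
        field_simp
      linear_combination -h
    have hI1 : (∫ y in y0 k..y1, Real.exp (β * y))
        = Real.exp (β * y1) / β - Real.exp (β * y0 k) / β := by
      apply intervalIntegral.integral_eq_sub_of_hasDerivAt
        (f := fun y => Real.exp (β * y) / β)
      · intro x _
        have h1 : HasDerivAt (fun y : ℝ => β * y) β x := by
          simpa using (hasDerivAt_id x).const_mul β
        have h2 := ((Real.hasDerivAt_exp (β * x)).comp x h1).div_const β
        exact h2.congr_deriv (by field_simp)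
      · exact (by fun_prop : Continuous fun y : ℝ => Real.exp (β * y)).intervalIntegrable _ _
    have hI2 : (∫ y in y0 k..y1, Real.exp (β * (M * k - N * y)))
        = (-(Real.exp (β * (M * k - N * y1)) / (β * N)))
          - (-(Real.exp (β * (M * k - N * y0 k)) / (β * N))) := by
      apply intervalIntegral.integral_eq_sub_of_hasDerivAt
        (f := fun y => -(Real.exp (β * (M * k - N * y)) / (β * N)))
      · intro x _
        have h1 : HasDerivAt (fun y : ℝ => M * k - N * y) (-N) x := by
          simpa using ((hasDerivAt_id x).const_mul N).const_sub (M * k)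
        have h2 : HasDerivAt (fun y : ℝ => β * (M * k - N * y)) (β * -N) x := h1.const_mul β
        have h3 := (((Real.hasDerivAt_exp _).comp x h2).div_const (β * N)).neg
        exact h3.congr_deriv (by field_simp)
      · exact (by fun_prop : Continuous fun y : ℝ => Real.exp (β * (M * k - N * y))).intervalIntegrable _ _
    have hraw : (∫ y in Icc (y0 k) y1,
          (lam - Real.exp (-(β * k)) - Real.exp (β * y) - Real.exp (β * (M * k - N * y))))
        = (y1 - y0 k) * (lam - Real.exp (-(β * k)))
          - (Real.exp (β * y1) / β - Real.exp (β * y0 k) / β)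
          - ((-(Real.exp (β * (M * k - N * y1)) / (β * N)))
              - (-(Real.exp (β * (M * k - N * y0 k)) / (β * N)))) := by
      rw [MeasureTheory.integral_Icc_eq_integral_Ioc, ← intervalIntegral.integral_of_le hy01k]
      have c1 : IntervalIntegrable (fun y : ℝ => lam - Real.exp (-(β * k)) - Real.exp (β * y))
          volume (y0 k) y1 :=
        (by fun_prop : Continuous fun y : ℝ => lam - Real.exp (-(β * k)) - Real.exp (β * y)).intervalIntegrable _ _
      have c2 : IntervalIntegrable (fun y : ℝ => Real.exp (β * (M * k - N * y)))
          volume (y0 k) y1 :=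
        (by fun_prop : Continuous fun y : ℝ => Real.exp (β * (M * k - N * y))).intervalIntegrable _ _
      have c4 : IntervalIntegrable (fun y : ℝ => Real.exp (β * y)) volume (y0 k) y1 :=
        (by fun_prop : Continuous fun y : ℝ => Real.exp (β * y)).intervalIntegrable _ _
      rw [intervalIntegral.integral_sub c1 c2, intervalIntegral.integral_sub intervalIntegrable_const c4,
        intervalIntegral.integral_const, hI1, hI2, smul_eq_mul]
    have step1 : (∫ y in Icc (y0 k) y1,
          (lam - Real.exp (-(β * k)) - Real.exp (β * y) - Real.exp (β * (M * k - N * y))))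
        ≤ ∫ y in Icc (y0 k) y1, f k y := by
      apply setIntegral_mono_on _ ((hfk_cont k).integrableOn_Icc) measurableSet_Icc
      · intro y _
        rw [hf]
        exact le_max_left _ _
      · exact (by fun_prop : Continuous fun y : ℝ =>
          lam - Real.exp (-(β * k)) - Real.exp (β * y) - Real.exp (β * (M * k - N * y))).integrableOn_Icc
    rw [e1, hexpL] at hraw
    rw [e2, hexpL] at hraw
    have p1 : 0 < Real.exp (β * y0 k) / β := by positivity
    have p2 : 0 < Real.exp (β * (M * k - N * y1)) / (β * N) := by positivity
    have expand : (y1 - y0 k) * (lam - Real.exp (-(β * k)))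
        = lam * (y1 - y0 k) - Real.exp (-(β * k)) * (y1 - y0 k) := by ring
    rw [expand] at hraw
    linarith [step1, hraw.ge, p1, p2]
  -- outer localization
  have hFeq : (∫ k, ∫ y, f k y) = ∫ k in Icc k0 k1, ∫ y, f k y := by
    rw [← MeasureTheory.integral_indicator measurableSet_Icc]
    congr 1
    funext k
    by_cases hk : k ∈ Icc k0 k1
    · rw [Set.indicator_of_mem hk]
    · rw [Set.indicator_of_notMem hk]
      rw [Set.mem_Icc, not_and_or] at hk
      have hz : ∀ y, f k y = 0 := by
        apply hvank
        rcases hk with h | h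
        · exact Or.inl (lt_of_not_ge h)
        · exact Or.inr (lt_of_not_ge h)
      have : (fun y => f k y) = fun _ : ℝ => (0:ℝ) := funext hz
      rw [this, integral_zero]
  -- measurability and integrability of the inner integral
  have hgm : StronglyMeasurable fun k => ∫ y, f k y :=
    (hfcont2.stronglyMeasurable).integral_prod_right'
  have hg_intOn : IntegrableOn (fun k => ∫ y, f k y) (Icc k0 k1) volume := by
    apply Measure.integrableOn_of_bounded (M := lam * (y1 - y0 k0)) measure_Icc_lt_top.ne
      hgm.aestronglyMeasurable
    filter_upwards [ae_restrict_mem measurableSet_Icc] with k hk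
    rw [Real.norm_eq_abs, abs_of_nonneg (integral_nonneg (hfnonneg k))]
    calc (∫ y, f k y) ≤ lam * (y1 - y0 k) := hupper_in k hk
      _ ≤ lam * (y1 - y0 k0) := by
          have := hℓmono k hk.1
          nlinarith
  -- the main interval integral of the linear length function
  have hJ' : (∫ k in k0..k1, lam * (y1 - y0 k))
      = (M + N + 1) ^ 2 / (2 * M * N) / β ^ 2 * lam * L ^ 2 := by
    have hrepr : (fun k => lam * (y1 - y0 k))
        = fun k => (lam * (y1 + L / (β * N))) - (lam * M / N) * k := by
      funext k
      rw [hy0, hy1]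
      simp only
      field_simp
      ring
    rw [hrepr]
    have c2' : IntervalIntegrable (fun k : ℝ => lam * M / N * k) volume k0 k1 :=
      (by fun_prop : Continuous fun k : ℝ => lam * M / N * k).intervalIntegrable _ _
    rw [intervalIntegral.integral_sub intervalIntegrable_const c2',
      intervalIntegral.integral_const, intervalIntegral.integral_const_mul, integral_id,
      smul_eq_mul]
    rw [hk0, hk1, hy1]
    field_simp
    ring
  have hJ : (∫ k in Icc k0 k1, lam * (y1 - y0 k))
      = (M + N + 1) ^ 2 / (2 * M * N) / β ^ 2 * lam * L ^ 2 := by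
    rw [MeasureTheory.integral_Icc_eq_integral_Ioc, ← intervalIntegral.integral_of_le hk01, hJ']
  -- outer upper bound
  have hUp : (∫ k in Icc k0 k1, ∫ y, f k y)
      ≤ (M + N + 1) ^ 2 / (2 * M * N) / β ^ 2 * lam * L ^ 2 := by
    rw [← hJ]
    apply setIntegral_mono_on hg_intOn _ measurableSet_Icc hupper_in
    exact (by
      have : Continuous fun k : ℝ => lam * (y1 - y0 k) := by
        rw [hy0]; simp only; fun_prop
      exact this.integrableOn_Icc)
  -- the exponential integral
  have hExpInt : (∫ k in k0..k1, Real.exp (-(β * k)))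
      = (-(Real.exp (-(β * k1)) / β)) - (-(Real.exp (-(β * k0)) / β)) := by
    apply intervalIntegral.integral_eq_sub_of_hasDerivAt
      (f := fun k => -(Real.exp (-(β * k)) / β))
    · intro x _
      have h1 : HasDerivAt (fun k : ℝ => -(β * k)) (-β) x := by
        simpa using ((hasDerivAt_id x).const_mul β).fun_neg
      have h2 := (((Real.hasDerivAt_exp _).comp x h1).div_const β).neg
      exact h2.congr_deriv (by field_simp)
    · exact (by fun_prop : Continuous fun k : ℝ => Real.exp (-(β * k))).intervalIntegrable _ _
  -- outer lower bound
  have hLowFun : Continuous fun k : ℝ =>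
      lam * (y1 - y0 k) - (y1 - y0 k0) * Real.exp (-(β * k)) - (lam / β + lam / (β * N)) := by
    rw [hy0]; simp only; fun_prop
  have hLow : (∫ k in Icc k0 k1,
        (lam * (y1 - y0 k) - (y1 - y0 k0) * Real.exp (-(β * k)) - (lam / β + lam / (β * N))))
      ≤ ∫ k in Icc k0 k1, ∫ y, f k y := by
    apply setIntegral_mono_on hLowFun.integrableOn_Icc hg_intOn measurableSet_Icc
    intro k hk
    have h1 := hinner_low k hk
    have h2 : Real.exp (-(β * k)) * (y1 - y0 k) ≤ (y1 - y0 k0) * Real.exp (-(β * k)) := by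
      rw [mul_comm (y1 - y0 k0)]
      exact mul_le_mul_of_nonneg_left (hℓmono k hk.1) (exp_pos _).le
    linarith
  have hKval : (∫ k in Icc k0 k1,
        (lam * (y1 - y0 k) - (y1 - y0 k0) * Real.exp (-(β * k)) - (lam / β + lam / (β * N))))
      = (M + N + 1) ^ 2 / (2 * M * N) / β ^ 2 * lam * L ^ 2
        - (y1 - y0 k0) * ((-(Real.exp (-(β * k1)) / β)) - (-(Real.exp (-(β * k0)) / β)))
        - (lam / β + lam / (β * N)) * (k1 - k0) := by
    rw [MeasureTheory.integral_Icc_eq_integral_Ioc, ← intervalIntegral.integral_of_le hk01]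
    have c1 : IntervalIntegrable (fun k : ℝ => lam * (y1 - y0 k)) volume k0 k1 := by
      apply Continuous.intervalIntegrable
      rw [hy0]; simp only; fun_prop
    have c2 : IntervalIntegrable (fun k : ℝ => (y1 - y0 k0) * Real.exp (-(β * k))) volume k0 k1 :=
      (by fun_prop : Continuous fun k : ℝ => (y1 - y0 k0) * Real.exp (-(β * k))).intervalIntegrable _ _
    rw [intervalIntegral.integral_sub (c1.sub c2) intervalIntegrable_const,
      intervalIntegral.integral_sub c1 c2,
      intervalIntegral.integral_const, hJ', intervalIntegral.integral_const_mul, hExpInt,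
      smul_eq_mul]
    ring
  have e3 : -(β * k0) = L := by
    rw [hk0]
    field_simp
  have hCeq : (y1 - y0 k0) * (lam / β) + (lam / β + lam / (β * N)) * (k1 - k0)
      = ((M + N + 1) / (β ^ 2 * N) + (1 + 1 / N) * (M + N + 1) / (β ^ 2 * M)) * lam * L := by
    rw [hv0, hk0, hk1]
    field_simp
    ring
  have hDown : (M + N + 1) ^ 2 / (2 * M * N) / β ^ 2 * lam * L ^ 2
        - ((M + N + 1) / (β ^ 2 * N) + (1 + 1 / N) * (M + N + 1) / (β ^ 2 * M)) * lam * L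
      ≤ ∫ k in Icc k0 k1, ∫ y, f k y := by
    rw [e3, hexpL] at hKval
    have p3 : 0 < Real.exp (-(β * k1)) / β := by positivity
    have h4 : (y1 - y0 k0) * ((-(Real.exp (-(β * k1)) / β)) - (-(lam / β)))
        ≤ (y1 - y0 k0) * (lam / β) := by
      apply mul_le_mul_of_nonneg_left _ hv0nonneg
      have : 0 < lam / β := by positivity
      linarith
    calc (M + N + 1) ^ 2 / (2 * M * N) / β ^ 2 * lam * L ^ 2
          - ((M + N + 1) / (β ^ 2 * N) + (1 + 1 / N) * (M + N + 1) / (β ^ 2 * M)) * lam * L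
        = (M + N + 1) ^ 2 / (2 * M * N) / β ^ 2 * lam * L ^ 2
          - ((y1 - y0 k0) * (lam / β) + (lam / β + lam / (β * N)) * (k1 - k0)) := by
          rw [hCeq]
      _ ≤ ∫ k in Icc k0 k1,
            (lam * (y1 - y0 k) - (y1 - y0 k0) * Real.exp (-(β * k)) - (lam / β + lam / (β * N))) := by
          rw [hKval]
          linarith [h4]
      _ ≤ _ := hLow
  -- conclusion
  have hC0 : 0 ≤ ((M + N + 1) / (β ^ 2 * N) + (1 + 1 / N) * (M + N + 1) / (β ^ 2 * M)) * lam * L := by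
    positivity
  simp only [hf] at hFeq hUp hDown
  rw [hFeq]
  rw [abs_le]
  constructor
  · linarith [hDown]
  · linarith [hUp, hC0]

theorem Hmn_phase_space_asymptotics (b : ℝ) (hb : 0 < b) (m n : ℕ) (hm : 0 < m) (hn : 0 < n) :
    ∃ C Λ : ℝ, 0 < C ∧ 0 < Λ ∧ ∀ lam : ℝ, Λ ≤ lam →
      |(∫ k : ℝ, ∫ y : ℝ,
          max (lam - Real.exp (-2 * π * b * k) - Real.exp (2 * π * b * y)
            - Real.exp (2 * π * b * (m * k - n * y))) 0)
        - ((m + n + 1)^2 / (2 * m * n) / (2 * π * b)^2) * lam * (Real.log lam)^2|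
      ≤ C * lam * Real.log lam := by
  have hπ := Real.pi_pos
  have hm1 : (1:ℝ) ≤ (m:ℝ) := by exact_mod_cast hm
  have hn1 : (1:ℝ) ≤ (n:ℝ) := by exact_mod_cast hn
  have hm0 : (0:ℝ) < (m:ℝ) := lt_of_lt_of_le one_pos hm1
  have hn0 : (0:ℝ) < (n:ℝ) := lt_of_lt_of_le one_pos hn1
  refine ⟨((m:ℝ) + n + 1) / ((2 * π * b) ^ 2 * n)
      + (1 + 1 / n) * ((m:ℝ) + n + 1) / ((2 * π * b) ^ 2 * m), Real.exp 1, ?_, Real.exp_pos 1, ?_⟩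
  · positivity
  · intro lam hlam
    have h := hmn_main (2 * π * b) (m:ℝ) (n:ℝ) lam (by positivity) hm1 hn1 hlam
    have hrw : ∀ k : ℝ, -2 * π * b * k = -(2 * π * b * k) := fun k => by ring
    simp only [hrw]
    exact h
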